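/- arXiv:2511.16171 — 7 statements merged into one kernel-verified Lean document; each statement's English description precedes it below -/
import Mathlib

section
/- Let Ω ⊂ ℝ^d be a nonempty bounded open set and let K denote its closure. For every integer n ≥ 1 and every r > 0, the set X_{n,r} of two-layer ReLU networks of width n with parameters in M_r, regarded as a subset of the space C(K, ℝ) of continuous real-valued functions on K equipped with the supremum norm, is a compact (equivalently, sequentially compact) subset of C(K, ℝ); moreover every uniform limit of a sequence in X_{n,r} again belongs to X_{n,r}. -/
open MeasureTheory Filter Topology Bornology

noncomputable section

/-- Parameter of a single neuron: `(a, b, c)`. -/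
abbrev NNParam (d : ℕ) : Type := ℝ × (Fin d → ℝ) × ℝ

/-- ℓ¹ norm on `ℝ^d`. -/
def l1 {d : ℕ} (b : Fin d → ℝ) : ℝ := ∑ i, |b i|

/-- The two-layer ReLU network with parameters `θ`. -/
def netFun {d n : ℕ} (θ : Fin n → NNParam d) : (Fin d → ℝ) → ℝ :=
  fun x => (1 / (n : ℝ)) * ∑ j, (θ j).1 * max (∑ i, (θ j).2.1 i * x i + (θ j).2.2) 0

theorem netFun_continuous {d n : ℕ} (θ : Fin n → NNParam d) : Continuous (netFun θ) := by
  unfold netFun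
  refine continuous_const.mul (continuous_finset_sum _ fun j _ => continuous_const.mul ?_)
  exact ((continuous_finset_sum _ fun i _ =>
    (continuous_const.mul (continuous_apply i))).add continuous_const).max continuous_const

/-- Membership of a single-neuron parameter in the set `M_r`. -/
def memMr {d : ℕ} (r : ℝ) (p : NNParam d) : Prop :=
  |p.1| ≤ r ∧ l1 p.2.1 + |p.2.2| = 1

/-- The two-layer ReLU network restricted to `K`, as a continuous map on `K`. -/
def netCM {d n : ℕ} (K : Set (Fin d → ℝ)) (θ : Fin n → NNParam d) : C(K, ℝ) :=
  ⟨fun x => netFun θ x.1, (netFun_continuous θ).comp continuous_subtype_val⟩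

/-- The class `X_{n,r}` of width-`n` networks with parameters in `M_r`, viewed inside `C(K, ℝ)`. -/
def XC {d : ℕ} (K : Set (Fin d → ℝ)) (n : ℕ) (r : ℝ) : Set C(K, ℝ) :=
  {f | ∃ θ : Fin n → NNParam d, (∀ j, memMr r (θ j)) ∧ f = netCM K θ}


lemma isCompact_Mr {d : ℕ} (r : ℝ) :
    IsCompact {p : NNParam d | memMr r p} := by
  have hl1 : Continuous fun p : NNParam d => l1 p.2.1 := by
    unfold l1
    exact continuous_finset_sum _ fun i _ =>
      ((continuous_apply i).comp (continuous_fst.comp continuous_snd)).abs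
  have hcl : IsClosed {p : NNParam d | memMr r p} := by
    have h1 : IsClosed {p : NNParam d | |p.1| ≤ r} :=
      isClosed_le continuous_fst.abs continuous_const
    have h2 : IsClosed {p : NNParam d | l1 p.2.1 + |p.2.2| = 1} :=
      isClosed_eq (hl1.add (continuous_snd.comp continuous_snd).abs) continuous_const
    exact h1.inter h2
  have hbd : IsBounded {p : NNParam d | memMr r p} := by
    refine (Metric.isBounded_closedBall (x := (0 : NNParam d)) (r := max r 1)).subset ?_
    intro p hp
    obtain ⟨ha, hbc⟩ := hp
    have hbi : ∀ i, |p.2.1 i| ≤ 1 := by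
      intro i
      have : |p.2.1 i| ≤ l1 p.2.1 := by
        unfold l1
        exact Finset.single_le_sum (f := fun j => |p.2.1 j|)
          (fun j _ => abs_nonneg _) (Finset.mem_univ i)
      nlinarith [abs_nonneg p.2.2]
    have hc : |p.2.2| ≤ 1 := by
      have : (0:ℝ) ≤ l1 p.2.1 := Finset.sum_nonneg fun j _ => abs_nonneg _
      linarith
    simp only [Metric.mem_closedBall, dist_zero_right, Prod.norm_def]
    refine max_le (le_max_of_le_left ?_) (max_le ?_ ?_)
    · simpa using ha
    · refine le_max_of_le_right ?_
      rcases isEmpty_or_nonempty (Fin d) with h | h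
      · simp [Pi.norm_def]
      · rw [pi_norm_le_iff_of_nonneg (by positivity)]
        intro i; simpa using hbi i
    · exact le_max_of_le_right hc
  exact Metric.isCompact_of_isClosed_isBounded hcl hbd

lemma netFun_joint_continuous {d n : ℕ} (K : Set (Fin d → ℝ)) :
    Continuous (fun p : (Fin n → NNParam d) × K => netFun p.1 p.2.1) := by
  unfold netFun
  refine continuous_const.mul (continuous_finset_sum _ fun j _ => ?_)
  have hθj : Continuous fun p : (Fin n → NNParam d) × K => p.1 j :=
    (continuous_apply j).comp continuous_fst
  have hx : Continuous fun p : (Fin n → NNParam d) × K => (p.2 : Fin d → ℝ) :=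
    continuous_subtype_val.comp continuous_snd
  refine (continuous_fst.comp hθj).mul ?_
  refine Continuous.max ?_ continuous_const
  refine Continuous.add (continuous_finset_sum _ fun i _ => ?_)
    (continuous_snd.comp (continuous_snd.comp hθj))
  exact ((continuous_apply i).comp (continuous_fst.comp (continuous_snd.comp hθj))).mul
    ((continuous_apply i).comp hx)

lemma netCM_continuous {d n : ℕ} (K : Set (Fin d → ℝ)) :
    Continuous (fun θ : Fin n → NNParam d => netCM K θ) := by
  have h : Continuous fun θ : Fin n → NNParam d =>
      (ContinuousMap.mk (fun p : (Fin n → NNParam d) × K => netFun p.1 p.2.1)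
        (netFun_joint_continuous K)).curry θ :=
    (ContinuousMap.mk _ (netFun_joint_continuous K)).curry.continuous
  exact h

/-- For a nonempty bounded open `Ω ⊆ ℝ^d` with closure `K`, and any `n ≥ 1`,
`r > 0`, the set `X_{n,r}` is a compact subset of `C(K, ℝ)` (with the uniform topology,
which on the compact set `K` is the compact-open topology), and every uniform limit of a
sequence in `X_{n,r}` again belongs to `X_{n,r}`. -/
theorem twoLayer_class_isCompact_in_CK
    {d : ℕ} (hd : 1 ≤ d) (Ω : Set (Fin d → ℝ)) (hne : Ω.Nonempty) (hΩo : IsOpen Ω)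
    (hΩb : IsBounded Ω) (n : ℕ) (hn : 1 ≤ n) (r : ℝ) (hr : 0 < r) :
    IsCompact (XC (closure Ω) n r) ∧
      ∀ (F : ℕ → C(closure Ω, ℝ)) (f : C(closure Ω, ℝ)),
        (∀ k, F k ∈ XC (closure Ω) n r) → Tendsto F atTop (nhds f) →
          f ∈ XC (closure Ω) n r := by
  have hT : IsCompact {θ : Fin n → NNParam d | ∀ j, memMr r (θ j)} := by
    have heq : {θ : Fin n → NNParam d | ∀ j, memMr r (θ j)} =
        Set.pi Set.univ (fun _ => {p : NNParam d | memMr r p}) := by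
      ext θ; simp [Set.mem_pi]
    rw [heq]
    exact isCompact_univ_pi fun _ => isCompact_Mr r
  have himg : XC (closure Ω) n r =
      (fun θ : Fin n → NNParam d => netCM (closure Ω) θ) ''
        {θ | ∀ j, memMr r (θ j)} := by
    ext f
    constructor
    · rintro ⟨θ, hθ, rfl⟩; exact ⟨θ, hθ, rfl⟩
    · rintro ⟨θ, hθ, rfl⟩; exact ⟨θ, hθ, rfl⟩
  have hcpt : IsCompact (XC (closure Ω) n r) := by
    rw [himg]
    exact hT.image (netCM_continuous (closure Ω))
  refine ⟨hcpt, fun F f hF hten => ?_⟩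
  exact hcpt.isClosed.mem_of_tendsto hten (Filter.Eventually.of_forall hF)


end
end

section
/- Let d ≥ 1, n ≥ 1, R > 0 and set C_R := max(R, 1). Let θ = ((a_j, b_j, c_j))_{j=1}^n ∈ (ℝ × ℝ^d × ℝ)^n satisfy ‖b_j‖₁ + |c_j| = 1 for all j, and let θ' = ((a'_j, b'_j, c'_j))_{j=1}^n ∈ (ℝ × ℝ^d × ℝ)^n be arbitrary. Then for every x ∈ ℝ^d with ‖x‖_∞ ≤ R, the two-layer ReLU networks satisfy |f_θ(x) − f_{θ'}(x)| ≤ C_R · [ (1/n) ∑_{j=1}^n |a_j − a'_j| + (1/n) ∑_{j=1}^n |a'_j| · ( ‖b_j − b'_j‖₁ + |c_j − c'_j| ) ]. -/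
open MeasureTheory Filter Topology Bornology

noncomputable section

/-- Pointwise stability of two-layer ReLU networks in the parameters:
if `‖b_j‖₁ + |c_j| = 1` for all `j` and `‖x‖_∞ ≤ R`, then with `C_R = max R 1`,
`|f_θ(x) − f_θ'(x)| ≤ C_R · [ (1/n) ∑_j |a_j − a'_j| + (1/n) ∑_j |a'_j| (‖b_j − b'_j‖₁ + |c_j − c'_j|) ]`. -/
theorem netFun_param_stability
    {d n : ℕ} (hd : 1 ≤ d) (hn : 1 ≤ n) (R : ℝ) (hR : 0 < R)
    (θ θ' : Fin n → NNParam d)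
    (hθ : ∀ j, l1 (θ j).2.1 + |(θ j).2.2| = 1)
    (x : Fin d → ℝ) (hx : ∀ i, |x i| ≤ R) :
    |netFun θ x - netFun θ' x| ≤
      max R 1 *
        ((1 / (n : ℝ)) * ∑ j, |(θ j).1 - (θ' j).1| +
          (1 / (n : ℝ)) * ∑ j, |(θ' j).1| *
            (l1 (fun i => (θ j).2.1 i - (θ' j).2.1 i) + |(θ j).2.2 - (θ' j).2.2|)) := by
  have hCR1 : (1:ℝ) ≤ max R 1 := le_max_right R 1
  have hCR0 : (0:ℝ) ≤ max R 1 := by linarith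
  have hRC : R ≤ max R 1 := le_max_left R 1
  set CR := max R 1 with hCRdef
  have key : ∀ j : Fin n,
      |(θ j).1 * max (∑ i, (θ j).2.1 i * x i + (θ j).2.2) 0
        - (θ' j).1 * max (∑ i, (θ' j).2.1 i * x i + (θ' j).2.2) 0|
      ≤ CR * |(θ j).1 - (θ' j).1|
        + CR * (|(θ' j).1| * (l1 (fun i => (θ j).2.1 i - (θ' j).2.1 i)
            + |(θ j).2.2 - (θ' j).2.2|)) := by
    intro j
    set a := (θ j).1
    set b := (θ j).2.1
    set c := (θ j).2.2
    set a' := (θ' j).1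
    set b' := (θ' j).2.1
    set c' := (θ' j).2.2
    set u := ∑ i, b i * x i + c with hu
    set u' := ∑ i, b' i * x i + c' with hu'
    have hbx : ∀ (g : Fin d → ℝ), |∑ i, g i * x i| ≤ R * ∑ i, |g i| := by
      intro g
      calc |∑ i, g i * x i| ≤ ∑ i, |g i * x i| := Finset.abs_sum_le_sum_abs _ _
        _ ≤ ∑ i, |g i| * R := by
          refine Finset.sum_le_sum fun i _ => ?_
          rw [abs_mul]
          exact mul_le_mul_of_nonneg_left (hx i) (abs_nonneg _)
        _ = R * ∑ i, |g i| := by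
          rw [Finset.mul_sum]
          exact Finset.sum_congr rfl fun i _ => by ring
    have hMu : |max u 0| ≤ CR := by
      have h1 : |max u 0| ≤ |u| := by
        rcases le_or_gt u 0 with h | h
        · simp [max_eq_right h, abs_nonneg]
        · rw [max_eq_left h.le]
      have h2 : |u| ≤ R * l1 b + |c| := by
        calc |u| ≤ |∑ i, b i * x i| + |c| := abs_add_le _ _
          _ ≤ R * ∑ i, |b i| + |c| := by linarith [hbx b]
          _ = R * l1 b + |c| := by rw [l1]
      have h3 : R * l1 b + |c| ≤ CR * (l1 b + |c|) := by
        have hl1 : 0 ≤ l1 b := Finset.sum_nonneg fun i _ => abs_nonneg _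
        nlinarith [abs_nonneg c]
      calc |max u 0| ≤ |u| := h1
        _ ≤ R * l1 b + |c| := h2
        _ ≤ CR * (l1 b + |c|) := h3
        _ = CR := by rw [hθ j]; ring
    have hdiff : |max u 0 - max u' 0| ≤ |u - u'| := abs_max_sub_max_le_abs u u' 0
    have huu' : |u - u'| ≤ CR * (l1 (fun i => b i - b' i) + |c - c'|) := by
      have : u - u' = (∑ i, (b i - b' i) * x i) + (c - c') := by
        have hs : ∑ i, (b i - b' i) * x i = (∑ i, b i * x i) - ∑ i, b' i * x i := by
          rw [← Finset.sum_sub_distrib]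
          exact Finset.sum_congr rfl fun i _ => by ring
        rw [hu, hu', hs]; ring
      rw [this]
      calc |(∑ i, (b i - b' i) * x i) + (c - c')|
          ≤ |∑ i, (b i - b' i) * x i| + |c - c'| := abs_add_le _ _
        _ ≤ R * (∑ i, |b i - b' i|) + |c - c'| := by linarith [hbx (fun i => b i - b' i)]
        _ ≤ CR * (l1 (fun i => b i - b' i) + |c - c'|) := by
            have hl1 : 0 ≤ l1 (fun i => b i - b' i) :=
              Finset.sum_nonneg fun i _ => abs_nonneg _
            have : l1 (fun i => b i - b' i) = ∑ i, |b i - b' i| := rfl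
            nlinarith [abs_nonneg (c - c')]
    have hsplit : a * max u 0 - a' * max u' 0
        = (a - a') * max u 0 + a' * (max u 0 - max u' 0) := by ring
    rw [hsplit]
    calc |(a - a') * max u 0 + a' * (max u 0 - max u' 0)|
        ≤ |(a - a') * max u 0| + |a' * (max u 0 - max u' 0)| := abs_add_le _ _
      _ = |a - a'| * |max u 0| + |a'| * |max u 0 - max u' 0| := by rw [abs_mul, abs_mul]
      _ ≤ |a - a'| * CR + |a'| * (CR * (l1 (fun i => b i - b' i) + |c - c'|)) := by
          gcongr
          exact le_trans hdiff huu'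
      _ = CR * |a - a'| + CR * (|a'| * (l1 (fun i => b i - b' i) + |c - c'|)) := by ring
  have hn0 : (0:ℝ) < (n:ℝ) := by exact_mod_cast hn
  have hinv : (0:ℝ) ≤ 1 / (n:ℝ) := by positivity
  rw [netFun, netFun]
  rw [← mul_sub, ← Finset.sum_sub_distrib, abs_mul]
  have h1 : |1 / (n:ℝ)| = 1 / (n:ℝ) := abs_of_nonneg hinv
  rw [h1]
  calc (1 / (n:ℝ)) * |∑ j, ((θ j).1 * max (∑ i, (θ j).2.1 i * x i + (θ j).2.2) 0
          - (θ' j).1 * max (∑ i, (θ' j).2.1 i * x i + (θ' j).2.2) 0)|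
      ≤ (1 / (n:ℝ)) * ∑ j, |(θ j).1 * max (∑ i, (θ j).2.1 i * x i + (θ j).2.2) 0
          - (θ' j).1 * max (∑ i, (θ' j).2.1 i * x i + (θ' j).2.2) 0| := by
        gcongr
        exact Finset.abs_sum_le_sum_abs _ _
    _ ≤ (1 / (n:ℝ)) * ∑ j, (CR * |(θ j).1 - (θ' j).1|
          + CR * (|(θ' j).1| * (l1 (fun i => (θ j).2.1 i - (θ' j).2.1 i)
            + |(θ j).2.2 - (θ' j).2.2|))) := by
        gcongr with j _
        exact key j
    _ = CR * ((1 / (n:ℝ)) * ∑ j, |(θ j).1 - (θ' j).1|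
          + (1 / (n:ℝ)) * ∑ j, |(θ' j).1| *
            (l1 (fun i => (θ j).2.1 i - (θ' j).2.1 i) + |(θ j).2.2 - (θ' j).2.2|)) := by
        rw [Finset.sum_add_distrib, ← Finset.mul_sum, ← Finset.mul_sum]
        ring

end
end

section
/- Let Ω ⊂ ℝ^d be a nonempty bounded open set, Y a normed vector space, A : L²(Ω) → Y a continuous (possibly nonlinear) map, and g ∈ Y. Then for every integer n ≥ 1 and every r > 0 there exists f* ∈ X_{n,r} such that ‖A(f*) − g‖_Y ≤ ‖A(f) − g‖_Y for all f ∈ X_{n,r}; that is, the residual functional f ↦ ‖A(f) − g‖_Y attains its minimum over the network class X_{n,r}. -/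
open MeasureTheory Filter Topology Bornology

noncomputable section

theorem memLp_net {d n : ℕ} {Ω : Set (Fin d → ℝ)} (hΩo : IsOpen Ω) (hΩb : IsBounded Ω)
    (θ : Fin n → NNParam d) : MemLp (netFun θ) 2 (volume.restrict Ω) := by
  have hc := netFun_continuous θ
  obtain ⟨C, hC⟩ := hΩb.isCompact_closure.exists_bound_of_continuousOn hc.continuousOn
  haveI : Fact (volume Ω < ⊤) := ⟨hΩb.measure_lt_top⟩
  refine MemLp.of_bound (hc.aestronglyMeasurable.restrict) C ?_
  filter_upwards [ae_restrict_mem hΩo.measurableSet] with x hx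
  exact hC x (subset_closure hx)

/-- The two-layer ReLU network with parameters `θ`, as an element of `L²(Ω)`. -/
def netLp {d n : ℕ} (Ω : Set (Fin d → ℝ)) (hΩo : IsOpen Ω) (hΩb : IsBounded Ω)
    (θ : Fin n → NNParam d) : Lp ℝ 2 (volume.restrict Ω) :=
  (memLp_net hΩo hΩb θ).toLp (netFun θ)

/-- The class `X_{n,r}` of width-`n` networks with parameters in `M_r`, inside `L²(Ω)`. -/
def Xlp {d : ℕ} (Ω : Set (Fin d → ℝ)) (hΩo : IsOpen Ω) (hΩb : IsBounded Ω)
    (n : ℕ) (r : ℝ) : Set (Lp ℝ 2 (volume.restrict Ω)) :=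
  {f | ∃ θ : Fin n → NNParam d, (∀ j, memMr r (θ j)) ∧ f = netLp Ω hΩo hΩb θ}

lemma neuron_lip {d : ℕ} {r M : ℝ} (hr : 0 ≤ r) (hM : 0 ≤ M)
    (p q : NNParam d) (hp : memMr r p) (hq : memMr r q)
    (x : Fin d → ℝ) (hx : ∀ i, |x i| ≤ M) :
    |p.1 * max (∑ i, p.2.1 i * x i + p.2.2) 0 - q.1 * max (∑ i, q.2.1 i * x i + q.2.2) 0|
      ≤ (M + 1) * (1 + r * (d + 1)) * dist p q := by
  set δ := dist p q with hδdef
  have hδ0 : 0 ≤ δ := dist_nonneg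
  -- component distances
  have ha : |p.1 - q.1| ≤ δ := by
    rw [← Real.dist_eq, hδdef, Prod.dist_eq]; exact le_max_left _ _
  have h2 : dist p.2 q.2 ≤ δ := by
    rw [hδdef, Prod.dist_eq]; exact le_max_right _ _
  have h21 : dist p.2.1 q.2.1 ≤ dist p.2 q.2 := by
    rw [Prod.dist_eq]; exact le_max_left _ _
  have h22 : dist p.2.2 q.2.2 ≤ dist p.2 q.2 := by
    rw [Prod.dist_eq]; exact le_max_right _ _
  have hb : ∀ i, |p.2.1 i - q.2.1 i| ≤ δ := fun i => by
    rw [← Real.dist_eq]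
    exact ((dist_le_pi_dist _ _ i).trans h21).trans h2
  have hc : |p.2.2 - q.2.2| ≤ δ := by
    rw [← Real.dist_eq]; exact h22.trans h2
  set s := ∑ i, p.2.1 i * x i + p.2.2 with hs
  set s' := ∑ i, q.2.1 i * x i + q.2.2 with hs'
  have habs : ∀ (b : Fin d → ℝ) (c : ℝ), l1 b + |c| = 1 → |∑ i, b i * x i + c| ≤ M + 1 := by
    intro b c h
    have h1 : |∑ i, b i * x i| ≤ ∑ i, |b i| * M := by
      refine (Finset.abs_sum_le_sum_abs _ _).trans (Finset.sum_le_sum fun i _ => ?_)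
      rw [abs_mul]
      exact mul_le_mul_of_nonneg_left (hx i) (abs_nonneg _)
    have hl : (0:ℝ) ≤ l1 b := Finset.sum_nonneg fun i _ => abs_nonneg _
    have hc0 : (0:ℝ) ≤ |c| := abs_nonneg _
    have h2 : (∑ i, |b i| * M) = l1 b * M := by rw [l1, Finset.sum_mul]
    calc |∑ i, b i * x i + c| ≤ |∑ i, b i * x i| + |c| := abs_add_le _ _
      _ ≤ l1 b * M + |c| := by rw [← h2]; exact add_le_add_left h1 _
      _ ≤ M + 1 := by nlinarith
  have hsb : |s| ≤ M + 1 := habs _ _ hp.2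
  have hss' : |s - s'| ≤ (M + 1) * (d + 1) * δ := by
    have hrw : s - s' = ∑ i, (p.2.1 i - q.2.1 i) * x i + (p.2.2 - q.2.2) := by
      have hsum : ∑ i, (p.2.1 i - q.2.1 i) * x i
          = (∑ i, p.2.1 i * x i) - ∑ i, q.2.1 i * x i := by
        rw [← Finset.sum_sub_distrib]
        exact Finset.sum_congr rfl fun i _ => by ring
      rw [hs, hs', hsum]; ring
    have h1 : |∑ i, (p.2.1 i - q.2.1 i) * x i| ≤ ∑ _i : Fin d, δ * M := by
      refine (Finset.abs_sum_le_sum_abs _ _).trans (Finset.sum_le_sum fun i _ => ?_)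
      rw [abs_mul]
      exact mul_le_mul (hb i) (hx i) (abs_nonneg _) hδ0
    have h2 : |s - s'| ≤ (d : ℝ) * (δ * M) + δ := by
      rw [hrw]
      refine (abs_add_le _ _).trans ?_
      have := h1
      simp only [Finset.sum_const, Finset.card_univ, Fintype.card_fin, nsmul_eq_mul] at this
      exact add_le_add this hc
    nlinarith
  have hq1 : |q.1| ≤ r := hq.1
  have hmax1 : |max s 0| ≤ M + 1 := by
    rw [abs_of_nonneg (le_max_right _ _)]
    exact max_le ((le_abs_self _).trans hsb) (by linarith)
  have hmax2 : |max s 0 - max s' 0| ≤ |s - s'| := abs_max_sub_max_le_abs _ _ _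
  calc |p.1 * max s 0 - q.1 * max s' 0|
      = |(p.1 - q.1) * max s 0 + q.1 * (max s 0 - max s' 0)| := by ring_nf
    _ ≤ |p.1 - q.1| * |max s 0| + |q.1| * |max s 0 - max s' 0| := by
        refine (abs_add_le _ _).trans ?_
        rw [abs_mul, abs_mul]
    _ ≤ δ * (M + 1) + r * ((M + 1) * (d + 1) * δ) := by
        refine add_le_add (mul_le_mul ha hmax1 (abs_nonneg _) hδ0)
          (mul_le_mul hq1 (hmax2.trans hss') (abs_nonneg _) hr)
    _ ≤ (M + 1) * (1 + r * (d + 1)) * δ := by nlinarith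

lemma netFun_lip {d n : ℕ} (hn : 0 < n) {r M : ℝ} (hr : 0 ≤ r) (hM : 0 ≤ M)
    (θ θ' : Fin n → NNParam d) (hθ : ∀ j, memMr r (θ j)) (hθ' : ∀ j, memMr r (θ' j))
    (x : Fin d → ℝ) (hx : ∀ i, |x i| ≤ M) :
    |netFun θ x - netFun θ' x| ≤ (M + 1) * (1 + r * (d + 1)) * dist θ θ' := by
  set C := (M + 1) * (1 + r * (d + 1)) with hC
  have hC0 : 0 ≤ C := by positivity
  have hδ0 : (0:ℝ) ≤ dist θ θ' := dist_nonneg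
  have hper : ∀ j : Fin n,
      |(θ j).1 * max (∑ i, (θ j).2.1 i * x i + (θ j).2.2) 0
        - (θ' j).1 * max (∑ i, (θ' j).2.1 i * x i + (θ' j).2.2) 0| ≤ C * dist θ θ' := by
    intro j
    refine (neuron_lip hr hM (θ j) (θ' j) (hθ j) (hθ' j) x hx).trans ?_
    exact mul_le_mul_of_nonneg_left (dist_le_pi_dist θ θ' j) hC0
  have hrw : netFun θ x - netFun θ' x
      = (1 / (n:ℝ)) * ∑ j, ((θ j).1 * max (∑ i, (θ j).2.1 i * x i + (θ j).2.2) 0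
        - (θ' j).1 * max (∑ i, (θ' j).2.1 i * x i + (θ' j).2.2) 0) := by
    rw [netFun, netFun, ← mul_sub, ← Finset.sum_sub_distrib]
  have hn0 : (0:ℝ) < (n:ℝ) := Nat.cast_pos.mpr hn
  rw [hrw, abs_mul, abs_of_pos (by positivity : (0:ℝ) < 1/(n:ℝ))]
  have hsum : |∑ j, ((θ j).1 * max (∑ i, (θ j).2.1 i * x i + (θ j).2.2) 0
        - (θ' j).1 * max (∑ i, (θ' j).2.1 i * x i + (θ' j).2.2) 0)| ≤ (n:ℝ) * (C * dist θ θ') := by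
    refine (Finset.abs_sum_le_sum_abs _ _).trans ?_
    calc ∑ j, |(θ j).1 * max (∑ i, (θ j).2.1 i * x i + (θ j).2.2) 0
        - (θ' j).1 * max (∑ i, (θ' j).2.1 i * x i + (θ' j).2.2) 0|
        ≤ ∑ _j : Fin n, C * dist θ θ' := Finset.sum_le_sum fun j _ => hper j
      _ = (n:ℝ) * (C * dist θ θ') := by
          simp [Finset.sum_const, Finset.card_univ, nsmul_eq_mul]
  calc (1/(n:ℝ)) * |∑ j, ((θ j).1 * max (∑ i, (θ j).2.1 i * x i + (θ j).2.2) 0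
        - (θ' j).1 * max (∑ i, (θ' j).2.1 i * x i + (θ' j).2.2) 0)|
      ≤ (1/(n:ℝ)) * ((n:ℝ) * (C * dist θ θ')) :=
        mul_le_mul_of_nonneg_left hsum (by positivity)
    _ = C * dist θ θ' := by field_simp

/-- For a continuous (possibly nonlinear) map `A : L²(Ω) → Y` into a
normed vector space and data `g ∈ Y`, the residual functional `f ↦ ‖A(f) − g‖` attains its
minimum over the network class `X_{n,r} ⊆ L²(Ω)`. -/
theorem residual_attains_min_on_network_class
    {d : ℕ} (hd : 1 ≤ d) (Ω : Set (Fin d → ℝ)) (hne : Ω.Nonempty) (hΩo : IsOpen Ω)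
    (hΩb : IsBounded Ω)
    {Y : Type*} [NormedAddCommGroup Y] [NormedSpace ℝ Y]
    (A : Lp ℝ 2 (volume.restrict Ω) → Y) (hA : Continuous A) (g : Y)
    (n : ℕ) (hn : 1 ≤ n) (r : ℝ) (hr : 0 < r) :
    ∃ fs ∈ Xlp Ω hΩo hΩb n r, ∀ f ∈ Xlp Ω hΩo hΩb n r, ‖A fs - g‖ ≤ ‖A f - g‖ := by
  simp only [Xlp, Set.mem_setOf_eq]
  classical
  haveI : IsFiniteMeasure (volume.restrict Ω) := ⟨by
    rw [Measure.restrict_apply_univ]; exact hΩb.measure_lt_top⟩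
  -- bound on Ω
  obtain ⟨M0, hM0⟩ := (Metric.isBounded_iff_subset_closedBall 0).mp hΩb
  set M : ℝ := max M0 0 with hMdef
  have hM : 0 ≤ M := le_max_right _ _
  have hxM : ∀ x ∈ Ω, ∀ i, |x i| ≤ M := by
    intro x hx i
    have h1 : ‖x‖ ≤ M0 := by simpa [Metric.mem_closedBall, dist_zero_right] using hM0 hx
    calc |x i| = ‖x i‖ := rfl
      _ ≤ ‖x‖ := norm_le_pi_norm x i
      _ ≤ M := h1.trans (le_max_left _ _)
  set C : ℝ := (M + 1) * (1 + r * (↑d + 1)) with hCdef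
  have hC0 : 0 ≤ C := by positivity
  set V : ℝ := (measureUnivNNReal (volume.restrict Ω) : ℝ) ^ ((2:ENNReal).toReal)⁻¹ with hVdef
  have hV0 : 0 ≤ V := by positivity
  set K : Set (Fin n → NNParam d) := {θ | ∀ j, memMr r (θ j)} with hKdef
  set Φ : (Fin n → NNParam d) → Lp ℝ 2 (volume.restrict Ω) := netLp Ω hΩo hΩb with hΦdef
  -- Lipschitz on K
  have hΦlip : LipschitzOnWith (V * C).toNNReal Φ K := by
    refine LipschitzOnWith.of_dist_le_mul fun θ hθ θ' hθ' => ?_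
    rw [dist_eq_norm]
    have hsub : Φ θ - Φ θ' = ((memLp_net hΩo hΩb θ).sub (memLp_net hΩo hΩb θ')).toLp
        (netFun θ - netFun θ') := ((memLp_net hΩo hΩb θ).toLp_sub (memLp_net hΩo hΩb θ')).symm
    rw [hsub]
    have hbd : ∀ᵐ x ∂(volume.restrict Ω), ‖(((memLp_net hΩo hΩb θ).sub (memLp_net hΩo hΩb θ')).toLp
        (netFun θ - netFun θ') : Lp ℝ 2 (volume.restrict Ω)) x‖ ≤ C * dist θ θ' := by
      filter_upwards [MemLp.coeFn_toLp ((memLp_net hΩo hΩb θ).sub (memLp_net hΩo hΩb θ')),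
        ae_restrict_mem hΩo.measurableSet] with x hx1 hx2
      rw [hx1]
      simpa using netFun_lip hn hr.le hM θ θ' hθ hθ' x (hxM x hx2)
    have := Lp.norm_le_of_ae_bound (μ := volume.restrict Ω)
      (f := ((memLp_net hΩo hΩb θ).sub (memLp_net hΩo hΩb θ')).toLp (netFun θ - netFun θ'))
      (C := C * dist θ θ') (by positivity) hbd
    refine this.trans ?_
    rw [Real.coe_toNNReal _ (by positivity)]
    ring_nf
    nlinarith [dist_nonneg (x := θ) (y := θ'), hV0, hC0,
      mul_nonneg hV0 (mul_nonneg hC0 (dist_nonneg (x := θ) (y := θ')))]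
  have hΦcont : ContinuousOn Φ K := hΦlip.continuousOn
  -- K is compact
  have hKeq : K = Set.pi Set.univ (fun _ : Fin n => {p : NNParam d | memMr r p}) := by
    ext θ; simp [hKdef, Set.mem_pi]
  have hMrclosed : IsClosed {p : NNParam d | memMr r p} := by
    have h1 : Continuous fun p : NNParam d => |p.1| := continuous_fst.abs
    have h2 : Continuous fun p : NNParam d => l1 p.2.1 + |p.2.2| := by
      refine Continuous.add ?_ (continuous_snd.snd.abs)
      exact continuous_finset_sum _ fun i _ => ((continuous_apply i).comp continuous_snd.fst).abs
    exact (isClosed_le h1 continuous_const).inter (isClosed_eq h2 continuous_const)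
  have hMrbdd : IsBounded {p : NNParam d | memMr r p} := by
    rw [Metric.isBounded_iff_subset_closedBall 0]
    refine ⟨max r 1, fun p hp => ?_⟩
    obtain ⟨hp1, hp2⟩ := hp
    have hl : (0:ℝ) ≤ l1 p.2.1 := Finset.sum_nonneg fun i _ => abs_nonneg _
    have hbi : ∀ i, |p.2.1 i| ≤ 1 := by
      intro i
      have : |p.2.1 i| ≤ l1 p.2.1 := Finset.single_le_sum (f := fun i => |p.2.1 i|)
        (fun i _ => abs_nonneg _) (Finset.mem_univ i)
      nlinarith [abs_nonneg p.2.2]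
    have hb : ‖p.2.1‖ ≤ 1 := pi_norm_le_iff_of_nonneg zero_le_one |>.mpr fun i => hbi i
    have hc : |p.2.2| ≤ 1 := by nlinarith
    rw [Metric.mem_closedBall, dist_zero_right, Prod.norm_def, Prod.norm_def]
    refine max_le (hp1.trans (le_max_left _ _)) (max_le (hb.trans (le_max_right _ _))
      (hc.trans (le_max_right _ _)))
  have hKcomp : IsCompact K := by
    rw [hKeq]
    exact isCompact_univ_pi fun _ =>
      Metric.isCompact_of_isClosed_isBounded hMrclosed hMrbdd
  have hKne : K.Nonempty := by
    refine ⟨fun _ => (0, fun _ => 0, 1), fun j => ⟨by simpa using hr.le, ?_⟩⟩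
    simp [l1]
  -- minimize
  have hψ : ContinuousOn (fun θ => ‖A (Φ θ) - g‖) K := by
    have h1 : ContinuousOn (fun θ => A (Φ θ)) K := fun θ hθ =>
      (hA.continuousAt).comp_continuousWithinAt (hΦcont θ hθ)
    exact (h1.sub continuousOn_const).norm
  obtain ⟨θs, hθsK, hθsmin⟩ := hKcomp.exists_isMinOn hKne hψ
  refine ⟨Φ θs, ⟨θs, hθsK, rfl⟩, ?_⟩
  rintro f ⟨θ, hθK, rfl⟩
  exact hθsmin hθK


end
end

section
/- Let Ω ⊂ ℝ^d be a nonempty bounded open set, Y a normed vector space, A : L²(Ω) → Y a map, f† ∈ L²(Ω), and g := A(f†). Assume A is locally Hölder continuous at f† of order θ ∈ (0, 1]: there exist L > 0 and γ > 0 such that ‖A(f) − A(f†)‖_Y ≤ L·‖f − f†‖_{L²(Ω)}^θ whenever ‖f − f†‖_{L²(Ω)} < γ. Let r : ℕ → (0, ∞) and assume the approximation property: there exists C₀ > 0 such that for every n ≥ 1 there is f_n ∈ X_{n, r(n)} with ‖f_n − f†‖_{L²(Ω)} ≤ C₀/√n. Fix τ > 1. Then there exists a constant C > 0 such that for every δ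 ∈ (0, 1], every g^δ ∈ Y with ‖g^δ − g‖_Y ≤ δ, and every integer n ≥ C·δ^{−2/θ}, one has inf_{f ∈ X_{n, r(n)}} ‖A(f) − g^δ‖_Y ≤ τ·δ. Consequently, the smallest network width n(δ) at which the discrepancy principle inf_{f ∈ X_{n, r(n)}} ‖A(f) − g^δ‖_Y ≤ τδ is satisfied obeys n(δ) = O(δ^{−2/θ}) as δ → 0. -/
open MeasureTheory Filter Topology Bornology

noncomputable section

set_option maxHeartbeats 1000000 in
/-- Quantitative termination of the discrepancy principle: if `A` is
locally Hölder continuous of order `θ ∈ (0,1]` at `f†` and the network classes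
`X_{n,r(n)}` approximate `f†` at rate `C₀/√n`, then there is a constant `C > 0` such that
for every noise level `δ ∈ (0,1]`, every `g^δ` with `‖g^δ − g‖ ≤ δ`, and every width
`n ≥ C·δ^{−2/θ}`, the minimal residual over `X_{n,r(n)}` is `≤ τδ`.  In particular the
discrepancy-principle stopping width is `O(δ^{−2/θ})`. -/
theorem discrepancy_principle_stopping_width_bound
    {d : ℕ} (hd : 1 ≤ d) (Ω : Set (Fin d → ℝ)) (hne : Ω.Nonempty) (hΩo : IsOpen Ω)
    (hΩb : IsBounded Ω)
    {Y : Type*} [NormedAddCommGroup Y] [NormedSpace ℝ Y]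
    (A : Lp ℝ 2 (volume.restrict Ω) → Y)
    (fdag : Lp ℝ 2 (volume.restrict Ω))
    (θh : ℝ) (hθ0 : 0 < θh) (hθ1 : θh ≤ 1)
    (L γ : ℝ) (hL : 0 < L) (hγ : 0 < γ)
    (hHolder : ∀ f : Lp ℝ 2 (volume.restrict Ω),
      ‖f - fdag‖ < γ → ‖A f - A fdag‖ ≤ L * ‖f - fdag‖ ^ θh)
    (r : ℕ → ℝ) (hr : ∀ n, 0 < r n)
    (C₀ : ℝ) (hC₀ : 0 < C₀)
    (happrox : ∀ n : ℕ, 1 ≤ n →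
      ∃ f ∈ Xlp Ω hΩo hΩb n (r n), ‖f - fdag‖ ≤ C₀ / Real.sqrt n)
    (τ : ℝ) (hτ : 1 < τ) :
    ∃ C : ℝ, 0 < C ∧
      ∀ δ : ℝ, 0 < δ → δ ≤ 1 → ∀ gδ : Y, ‖gδ - A fdag‖ ≤ δ →
        ∀ n : ℕ, C * δ ^ (-(2 / θh)) ≤ (n : ℝ) →
          sInf {y : ℝ | ∃ f ∈ Xlp Ω hΩo hΩb n (r n), y = ‖A f - gδ‖} ≤ τ * δ := by
  have hτ1 : 0 < τ - 1 := by linarith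
  set M : ℝ := L / (τ - 1) with hMdef
  have hM0 : 0 < M := div_pos hL hτ1
  refine ⟨C₀^2 * M ^ (2/θh) + (C₀/γ)^2 + 1, by positivity, ?_⟩
  intro δ hδ hδ1 gδ hgδ n hn
  set C : ℝ := C₀^2 * M ^ (2/θh) + (C₀/γ)^2 + 1 with hCdef
  have hCpos : 0 < C := by positivity
  have hMpow : 0 ≤ C₀^2 * M ^ (2/θh) := by positivity
  have hδr : (1:ℝ) ≤ δ ^ (-(2/θh)) := by
    refine Real.one_le_rpow_of_pos_of_le_one_of_nonpos hδ hδ1 ?_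
    have : 0 < 2/θh := by positivity
    linarith
  have hCn : C ≤ (n:ℝ) := le_trans (le_mul_of_one_le_right hCpos.le hδr) hn
  have hn1R : (1:ℝ) ≤ (n:ℝ) := by nlinarith [sq_nonneg (C₀/γ)]
  have hn1 : 1 ≤ n := by exact_mod_cast hn1R
  obtain ⟨f, hfX, hfapp⟩ := happrox n hn1
  have hnpos : (0:ℝ) < n := by linarith
  have hsq : 0 < Real.sqrt n := Real.sqrt_pos.mpr hnpos
  -- Step A : C₀ / √n < γ
  have hA' : (C₀/γ)^2 < (n:ℝ) := by nlinarith
  have hAlt' : C₀/γ < Real.sqrt n := (Real.lt_sqrt (by positivity)).mpr hA'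
  have hAlt : C₀ / Real.sqrt n < γ := by
    rw [div_lt_iff₀ hsq]
    have := (div_lt_iff₀ hγ).mp hAlt'
    nlinarith
  -- Step B : L * (C₀/√n)^θh ≤ (τ-1) * δ
  set s : ℝ := (τ-1) * δ / L with hsdef
  have hs : 0 < s := by positivity
  have hsM : s * M = δ := by rw [hsdef, hMdef]; field_simp
  have key : C₀^2 ≤ s^(2/θh) * n := by
    have h1 : C₀^2 * M^(2/θh) * δ^(-(2/θh)) ≤ (n:ℝ) := by
      refine le_trans ?_ hn
      have hCC : C₀^2 * M^(2/θh) ≤ C := by nlinarith [sq_nonneg (C₀/γ)]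
      exact mul_le_mul_of_nonneg_right hCC (Real.rpow_nonneg hδ.le _)
    have h2 : s^(2/θh) * (C₀^2 * M^(2/θh) * δ^(-(2/θh))) = C₀^2 := by
      calc s^(2/θh) * (C₀^2 * M^(2/θh) * δ^(-(2/θh)))
          = C₀^2 * ((s*M)^(2/θh) * δ^(-(2/θh))) := by
            rw [Real.mul_rpow hs.le hM0.le]; ring
        _ = C₀^2 * (δ^(2/θh) * δ^(-(2/θh))) := by rw [hsM]
        _ = C₀^2 * δ^(2/θh + -(2/θh)) := by rw [Real.rpow_add hδ]
        _ = C₀^2 := by rw [add_neg_cancel, Real.rpow_zero, mul_one]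
    calc C₀^2 = s^(2/θh) * (C₀^2 * M^(2/θh) * δ^(-(2/θh))) := h2.symm
      _ ≤ s^(2/θh) * n := mul_le_mul_of_nonneg_left h1 (Real.rpow_nonneg hs.le _)
  have hsq2 : Real.sqrt n ^ 2 = (n:ℝ) := Real.sq_sqrt hnpos.le
  have hrp : (s^(1/θh))^2 = s^(2/θh) := by
    rw [sq, ← Real.rpow_add hs]; congr 1; ring
  have hrpn : 0 ≤ s^(1/θh) := Real.rpow_nonneg hs.le _
  have claim1 : C₀ / Real.sqrt n ≤ s^(1/θh) := by
    rw [div_le_iff₀ hsq]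
    have hprod : (s^(1/θh) * Real.sqrt n)^2 = s^(2/θh) * n := by rw [mul_pow, hrp, hsq2]
    have h5 := Real.sqrt_le_sqrt key
    rwa [Real.sqrt_sq hC₀.le, ← hprod, Real.sqrt_sq (by positivity)] at h5
  have hBθ : (C₀/Real.sqrt n)^θh ≤ s := by
    calc (C₀/Real.sqrt n)^θh ≤ (s^(1/θh))^θh :=
          Real.rpow_le_rpow (by positivity) claim1 hθ0.le
      _ = s := by
          rw [← Real.rpow_mul hs.le, one_div_mul_cancel hθ0.ne', Real.rpow_one]
  have hB : L * (C₀/Real.sqrt n)^θh ≤ (τ-1) * δ := by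
    have h := mul_le_mul_of_nonneg_left hBθ hL.le
    have : L * s = (τ-1) * δ := by rw [hsdef]; field_simp
    linarith
  -- conclusion
  have h1 := hHolder f (lt_of_le_of_lt hfapp hAlt)
  have h2 : ‖f - fdag‖^θh ≤ (C₀/Real.sqrt n)^θh :=
    Real.rpow_le_rpow (norm_nonneg _) hfapp hθ0.le
  have h3 : ‖A f - gδ‖ ≤ ‖A f - A fdag‖ + ‖A fdag - gδ‖ :=
    norm_sub_le_norm_sub_add_norm_sub _ _ _
  have h4 : ‖A fdag - gδ‖ ≤ δ := by rw [norm_sub_rev]; exact hgδ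
  have hres : ‖A f - gδ‖ ≤ τ * δ := by
    nlinarith [mul_le_mul_of_nonneg_left h2 hL.le]
  refine le_trans (csInf_le ⟨0, ?_⟩ ⟨f, hfX, rfl⟩) hres
  rintro y ⟨f', -, rfl⟩; exact norm_nonneg _

end
end

section
/- Let Ω ⊂ ℝ^d be a nonempty bounded open set, Y a normed vector space, g ∈ Y, and D : Y × Y → [0, ∞) a functional such that the map L²(Ω) → [0, ∞), f ↦ D(A(f), g), is sequentially lower semicontinuous with respect to L²(Ω)-convergence, where A : L²(Ω) → Y is a given (possibly nonlinear) map. Let φ : [0, ∞) → [0, ∞) be continuous, monotonically increasing, and satisfy φ(t) → ∞ as t → ∞. Fix α > 0 and an integer n ≥ 1. Then there exists θ* ∈ Θ_n minimizing the Tikhonov functional T(θ) := D(A(f_θ), g) + α·φ(c(θ)) over Θ_n, i.e. T(θ*) ≤ T(θ) for all θ ∈ Θ_n. -/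
open MeasureTheory Filter Topology Bornology

noncomputable section

/-- The parameter domain `Θ_n`: all inner-layer parameters lie on the ℓ¹ unit sphere. -/
def ΘCond {d n : ℕ} (θ : Fin n → NNParam d) : Prop :=
  ∀ j, l1 (θ j).2.1 + |(θ j).2.2| = 1

/-- The path-norm functional `c(θ) = (1/n) ∑_j |a_j| (‖b_j‖₁ + |c_j|)`. -/
def pathNorm {d n : ℕ} (θ : Fin n → NNParam d) : ℝ :=
  (1 / (n : ℝ)) * ∑ j, |(θ j).1| * (l1 (θ j).2.1 + |(θ j).2.2|)

/-- Joint continuity of `netFun` in parameters and input. -/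
theorem netFun_joint_cont {d n : ℕ} {X : Type*} [TopologicalSpace X] (g : X → (Fin d → ℝ))
    (hg : Continuous g) :
    Continuous fun p : (Fin n → NNParam d) × X => netFun p.1 (g p.2) := by
  unfold netFun
  refine continuous_const.mul (continuous_finset_sum _ fun j _ => ?_)
  have hj : Continuous fun p : (Fin n → NNParam d) × X => p.1 j :=
    (continuous_apply j).comp continuous_fst
  refine hj.fst.mul (Continuous.max ?_ continuous_const)
  refine Continuous.add (continuous_finset_sum _ fun i _ => ?_) hj.snd.snd
  exact ((continuous_apply i).comp hj.snd.fst).mul ((continuous_apply i).comp (hg.comp continuous_snd))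

/-- Sequential continuity of `θ ↦ netLp θ` in `L²(Ω)`. -/
theorem tendsto_netLp {d n : ℕ} {Ω : Set (Fin d → ℝ)} (hΩo : IsOpen Ω) (hΩb : IsBounded Ω)
    (u : ℕ → Fin n → NNParam d) (θ : Fin n → NNParam d)
    (hu : Tendsto u atTop (nhds θ)) :
    Tendsto (fun k => netLp Ω hΩo hΩb (u k)) atTop (nhds (netLp Ω hΩo hΩb θ)) := by
  haveI : CompactSpace (closure Ω) := isCompact_iff_compactSpace.mp hΩb.isCompact_closure
  let F : C((Fin n → NNParam d) × (closure Ω), ℝ) :=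
    ⟨fun p => netFun p.1 p.2.1, netFun_joint_cont _ continuous_subtype_val⟩
  let G : C(Fin n → NNParam d, C(closure Ω, ℝ)) := F.curry
  have hG : Tendsto (fun k => G (u k)) atTop (nhds (G θ)) := (G.continuous.tendsto θ).comp hu
  have hnorm : Tendsto (fun k => ‖G (u k) - G θ‖) atTop (nhds 0) := by
    simpa using tendsto_iff_norm_sub_tendsto_zero.mp hG
  set μ := volume.restrict Ω with hμdef
  have hμ : μ Set.univ < ⊤ := by
    simp only [hμdef, Measure.restrict_apply_univ]; exact hΩb.measure_lt_top
  set c0 : ENNReal := μ Set.univ ^ ((2 : ENNReal).toReal)⁻¹ with hc0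
  have hc0top : c0 ≠ ⊤ := (ENNReal.rpow_lt_top_of_nonneg (by norm_num) hμ.ne).ne
  rw [tendsto_iff_dist_tendsto_zero]
  refine squeeze_zero (fun k => dist_nonneg) (fun k => ?_)
    (by simpa using hnorm.const_mul c0.toReal)
  have hb : ∀ᵐ x ∂μ, ‖(netFun (u k) - netFun θ) x‖ ≤ ‖G (u k) - G θ‖ := by
    filter_upwards [ae_restrict_mem hΩo.measurableSet] with x hx
    have h1 := ContinuousMap.norm_coe_le_norm (G (u k) - G θ) ⟨x, subset_closure hx⟩
    simpa [G, F, ContinuousMap.curry_apply] using h1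
  have h2 : dist (netLp Ω hΩo hΩb (u k)) (netLp Ω hΩo hΩb θ)
      = (eLpNorm (netFun (u k) - netFun θ) 2 μ).toReal := by
    rw [dist_eq_norm, netLp, netLp, ← MemLp.toLp_sub, Lp.norm_toLp]
  rw [h2]
  have h3 := eLpNorm_le_of_ae_bound (p := 2) (μ := μ) hb
  calc (eLpNorm (netFun (u k) - netFun θ) 2 μ).toReal
      ≤ (c0 * ENNReal.ofReal ‖G (u k) - G θ‖).toReal :=
        ENNReal.toReal_mono (ENNReal.mul_ne_top hc0top ENNReal.ofReal_ne_top) h3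
    _ = c0.toReal * ‖G (u k) - G θ‖ := by
        rw [ENNReal.toReal_mul, ENNReal.toReal_ofReal (norm_nonneg _)]

theorem pathNorm_continuous {d n : ℕ} : Continuous (fun θ : Fin n → NNParam d => pathNorm θ) := by
  unfold pathNorm l1
  refine continuous_const.mul (continuous_finset_sum _ fun j _ => ?_)
  have hj : Continuous fun θ : Fin n → NNParam d => θ j := continuous_apply j
  exact (hj.fst.abs).mul
    (((continuous_finset_sum _ fun i _ => ((continuous_apply i).comp hj.snd.fst).abs)).add
      hj.snd.snd.abs)

/-- Existence of Tikhonov minimizers over the network parameter class: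
if `f ↦ D(A f, g)` is nonnegative and sequentially lower semicontinuous w.r.t.
`L²(Ω)`-convergence, and `φ : [0,∞) → [0,∞)` is continuous, monotone and tends to `∞`,
then for every `α > 0` and `n ≥ 1` the Tikhonov functional
`T(θ) = D(A f_θ, g) + α φ(c(θ))` attains its minimum over `Θ_n`. -/
theorem tikhonov_minimizer_exists
    {d : ℕ} (hd : 1 ≤ d) (Ω : Set (Fin d → ℝ)) (hne : Ω.Nonempty) (hΩo : IsOpen Ω)
    (hΩb : IsBounded Ω)
    {Y : Type*} [NormedAddCommGroup Y] [NormedSpace ℝ Y]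
    (A : Lp ℝ 2 (volume.restrict Ω) → Y) (g : Y)
    (D : Y → Y → ℝ) (hD0 : ∀ y y', 0 ≤ D y y')
    (hlsc : ∀ (F : ℕ → Lp ℝ 2 (volume.restrict Ω)) (f : Lp ℝ 2 (volume.restrict Ω)),
      Tendsto F atTop (nhds f) →
        D (A f) g ≤ liminf (fun k => D (A (F k)) g) atTop)
    (φ : ℝ → ℝ) (hφc : Continuous φ) (hφm : Monotone φ) (hφ0 : ∀ t, 0 ≤ φ t)
    (hφtop : Tendsto φ atTop atTop)
    (α : ℝ) (hα : 0 < α) (n : ℕ) (hn : 1 ≤ n) :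
    ∃ θs : Fin n → NNParam d, ΘCond θs ∧
      ∀ θ : Fin n → NNParam d, ΘCond θ →
        D (A (netLp Ω hΩo hΩb θs)) g + α * φ (pathNorm θs) ≤
          D (A (netLp Ω hΩo hΩb θ)) g + α * φ (pathNorm θ) := by
  classical
  -- a base point of Θ_n
  let e : Fin d := ⟨0, hd⟩
  let θ₀ : Fin n → NNParam d := fun _ => (0, fun i => if i = e then 1 else 0, 0)
  have hθ₀ : ΘCond θ₀ := by
    intro j
    simp [θ₀, ΘCond, l1, apply_ite abs]
  -- the Tikhonov functional
  set T : (Fin n → NNParam d) → ℝ :=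
    fun θ => D (A (netLp Ω hΩo hΩb θ)) g + α * φ (pathNorm θ) with hTdef
  have hT0 : ∀ θ, 0 ≤ T θ := fun θ => add_nonneg (hD0 _ _) (mul_nonneg hα.le (hφ0 _))
  -- coercivity bound
  obtain ⟨M₀, hM₀⟩ := (hφtop.eventually (eventually_ge_atTop (T θ₀ / α + 1))).exists_forall_of_atTop
  set M : ℝ := max M₀ 0 with hMdef
  have hM : ∀ t, M ≤ t → T θ₀ / α + 1 ≤ φ t := fun t ht =>
    hM₀ t (le_trans (le_max_left _ _) ht)
  have hM0 : 0 ≤ M := le_max_right _ _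
  set R : ℝ := (n : ℝ) * M with hRdef
  have hn0 : (0 : ℝ) < n := by exact_mod_cast hn
  have hR0 : 0 ≤ R := mul_nonneg hn0.le hM0
  -- the compact parameter set
  set K : Set (Fin n → NNParam d) := {θ | ΘCond θ ∧ ∀ j, |(θ j).1| ≤ R} with hKdef
  have hθ₀K : θ₀ ∈ K := ⟨hθ₀, fun j => by simpa [θ₀] using hR0⟩
  -- simple form of pathNorm on Θ_n
  have hpn : ∀ θ : Fin n → NNParam d, ΘCond θ →
      pathNorm θ = (1 / (n : ℝ)) * ∑ j, |(θ j).1| := by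
    intro θ hθ
    unfold pathNorm
    congr 1
    exact Finset.sum_congr rfl fun j _ => by rw [hθ j, mul_one]
  -- K is compact
  have hKclosed : IsClosed K := by
    have h1 : ∀ j : Fin n, Continuous fun θ : Fin n → NNParam d =>
        l1 (θ j).2.1 + |(θ j).2.2| := by
      intro j
      have hj : Continuous fun θ : Fin n → NNParam d => θ j := continuous_apply j
      unfold l1
      exact ((continuous_finset_sum _ fun i _ =>
        ((continuous_apply i).comp hj.snd.fst).abs)).add hj.snd.snd.abs
    have h2 : IsClosed {θ : Fin n → NNParam d | ΘCond θ} := by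
      have : {θ : Fin n → NNParam d | ΘCond θ} =
          ⋂ j, {θ | l1 (θ j).2.1 + |(θ j).2.2| = 1} := by
        ext θ; simp [ΘCond, Set.mem_iInter]
      rw [this]
      exact isClosed_iInter fun j => isClosed_eq (h1 j) continuous_const
    have h3 : IsClosed {θ : Fin n → NNParam d | ∀ j, |(θ j).1| ≤ R} := by
      have : {θ : Fin n → NNParam d | ∀ j, |(θ j).1| ≤ R} =
          ⋂ j, {θ | |(θ j).1| ≤ R} := by
        ext θ; simp [Set.mem_iInter]
      rw [this]
      exact isClosed_iInter fun j =>
        isClosed_le ((continuous_apply j).fst.abs) continuous_const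
    exact h2.inter h3
  have hKsub : K ⊆ Metric.closedBall 0 (max R 1) := by
    intro θ hθ
    rw [Metric.mem_closedBall, dist_zero_right]
    refine (pi_norm_le_iff_of_nonneg (le_max_of_le_right zero_le_one)).2 fun j => ?_
    rw [Prod.norm_def]
    refine max_le (le_trans (by simpa using hθ.2 j) (le_max_left _ _)) ?_
    rw [Prod.norm_def]
    have hsum := hθ.1 j
    have hc : |(θ j).2.2| ≤ 1 := by
      have : 0 ≤ l1 (θ j).2.1 := Finset.sum_nonneg fun i _ => abs_nonneg _
      linarith
    have hbmax : ‖(θ j).2.1‖ ≤ 1 := by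
      refine (pi_norm_le_iff_of_nonneg zero_le_one).2 fun i => ?_
      have h1 : |(θ j).2.1 i| ≤ l1 (θ j).2.1 :=
        Finset.single_le_sum (f := fun i => |(θ j).2.1 i|)
          (fun i _ => abs_nonneg _) (Finset.mem_univ i)
      have : 0 ≤ |(θ j).2.2| := abs_nonneg _
      simpa [Real.norm_eq_abs] using by linarith
    refine le_trans (max_le hbmax (by simpa [Real.norm_eq_abs] using hc)) (le_max_right _ _)
  have hKcomp : IsCompact K :=
    (isCompact_closedBall (0 : Fin n → NNParam d) (max R 1)).of_isClosed_subset hKclosed hKsub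
  -- minimizing sequence
  set S : Set ℝ := T '' K with hSdef
  have hSne : S.Nonempty := ⟨T θ₀, θ₀, hθ₀K, rfl⟩
  have hSbdd : BddBelow S := ⟨0, fun s hs => by obtain ⟨θ, _, rfl⟩ := hs; exact hT0 θ⟩
  set m : ℝ := sInf S with hmdef
  have hmle : ∀ θ ∈ K, m ≤ T θ := fun θ hθ => csInf_le hSbdd ⟨θ, hθ, rfl⟩
  have hseq : ∀ k : ℕ, ∃ θ ∈ K, T θ < m + 1 / (k + 1) := by
    intro k
    obtain ⟨s, hs, hlt⟩ := Real.lt_sInf_add_pos hSne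
      (show (0:ℝ) < 1 / (k+1) by positivity)
    obtain ⟨θ, hθ, rfl⟩ := hs
    exact ⟨θ, hθ, hlt⟩
  choose u huK huT using hseq
  obtain ⟨θs, hθsK, ψ, hψ, hψt⟩ := hKcomp.tendsto_subseq huK
  -- lower semicontinuity along the subsequence
  have hnet := tendsto_netLp hΩo hΩb (fun k => u (ψ k)) θs hψt
  have hDle := hlsc _ _ hnet
  have hφt : Tendsto (fun k => α * φ (pathNorm (u (ψ k)))) atTop
      (nhds (α * φ (pathNorm θs))) :=
    (((hφc.comp pathNorm_continuous).tendsto θs).comp hψt).const_mul α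
  set Dk : ℕ → ℝ := fun k => D (A (netLp Ω hΩo hΩb (u (ψ k)))) g with hDkdef
  set gk : ℕ → ℝ := fun k => m + 1 / (k + 1) - α * φ (pathNorm (u (ψ k))) with hgkdef
  have hDg : ∀ k, Dk k ≤ gk k := by
    intro k
    have h1 : T (u (ψ k)) < m + 1 / (ψ k + 1) := huT (ψ k)
    have h2 : (1 : ℝ) / (ψ k + 1) ≤ 1 / (k + 1) := by
      apply one_div_le_one_div_of_le (by positivity)
      have h0 : (k : ℝ) ≤ (ψ k : ℝ) := by exact_mod_cast hψ.le_apply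
      linarith
    have h3 : T (u (ψ k)) = Dk k + α * φ (pathNorm (u (ψ k))) := rfl
    simp only [hgkdef]
    linarith
  have hgt : Tendsto gk atTop (nhds (m - α * φ (pathNorm θs))) := by
    have h1 : Tendsto (fun k : ℕ => m + 1 / ((k : ℝ) + 1)) atTop (nhds (m + 0)) :=
      tendsto_const_nhds.add tendsto_one_div_add_atTop_nhds_zero_nat
    simpa [hgkdef, one_div] using h1.sub hφt
  have hliminf : liminf Dk atTop ≤ m - α * φ (pathNorm θs) := by
    have h := liminf_le_liminf (Filter.Eventually.of_forall hDg)
      ⟨0, Filter.eventually_map.2 (Filter.Eventually.of_forall fun k => hD0 _ _)⟩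
      hgt.isBoundedUnder_le.isCoboundedUnder_ge
    rwa [hgt.liminf_eq] at h
  have hTm : T θs ≤ m := by
    have h1 : D (A (netLp Ω hΩo hΩb θs)) g ≤ m - α * φ (pathNorm θs) :=
      le_trans hDle hliminf
    simp only [hTdef]
    linarith
  -- conclusion
  refine ⟨θs, hθsK.1, fun θ hθ => ?_⟩
  by_cases hK : θ ∈ K
  · exact le_trans hTm (hmle θ hK)
  · have hj : ∃ j, R < |(θ j).1| := by
      by_contra h
      push_neg at h
      exact hK ⟨hθ, h⟩
    obtain ⟨j, hj⟩ := hj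
    have hpnM : M ≤ pathNorm θ := by
      rw [hpn θ hθ]
      have h1 : |(θ j).1| ≤ ∑ l, |(θ l).1| :=
        Finset.single_le_sum (f := fun l => |(θ l).1|)
          (fun l _ => abs_nonneg _) (Finset.mem_univ j)
      have h2 : R ≤ ∑ l, |(θ l).1| := le_trans hj.le h1
      rw [hRdef] at h2
      rw [div_mul_eq_mul_div, le_div_iff₀ hn0, one_mul, mul_comm]
      linarith
    have hφge : T θ₀ / α + 1 ≤ φ (pathNorm θ) := hM _ hpnM
    have h3 : T θ₀ + α ≤ α * φ (pathNorm θ) := by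
      have h' := mul_le_mul_of_nonneg_left hφge hα.le
      rw [mul_add, mul_one, mul_div_cancel₀ _ hα.ne'] at h'
      exact h'
    have h5 : T θs ≤ T θ₀ := le_trans hTm (hmle θ₀ hθ₀K)
    have h6 : 0 ≤ D (A (netLp Ω hΩo hΩb θ)) g := hD0 _ _
    show T θs ≤ T θ
    simp only [hTdef] at h3 h5 ⊢
    linarith


end
end

section
/- Let Ω ⊂ ℝ^d be a nonempty bounded open set, Y a normed vector space, A : L²(Ω) → Y a (possibly nonlinear) map, and D : Y × Y → [0, ∞) a functional such that: (i) the map (f, g') ↦ D(A(f), g') is sequentially lower semicontinuous with respect to L²(Ω)-convergence in f and norm convergence in g'; (ii) for each y ∈ Y the map g' ↦ D(y, g') is continuous. Let φ : [0, ∞) → [0, ∞) be continuous, monotonically increasing, with φ(t) → ∞ as t → ∞; fix α > 0 and n ≥ 1, and write T(θ, g') := D(A(f_θ), g') + α·φ(c(θ)) for θ ∈ Θ_n. Let g ∈ Y and (g_k) ⊆ Y with g_k → g, and for each k let θ_k ∈ Θ_n be a minimizer of T(·, g_k) over Θ_n. Then there exist a subsequence (θ_{k_ℓ}) and θ* ∈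 Θ_n such that θ_{k_ℓ} → θ* in (ℝ × ℝ^d × ℝ)^n, hence f_{θ_{k_ℓ}} → f_{θ*} in L²(Ω), and θ* is a minimizer of T(·, g) over Θ_n. -/
open MeasureTheory Filter Topology Bornology

noncomputable section

lemma l1_nonneg {d : ℕ} (b : Fin d → ℝ) : 0 ≤ l1 b :=
  Finset.sum_nonneg fun _ _ => abs_nonneg _

lemma l1_cont {d : ℕ} : Continuous (l1 (d := d)) := by unfold l1; fun_prop

lemma abs_le_l1 {d : ℕ} (b : Fin d → ℝ) (i : Fin d) : |b i| ≤ l1 b :=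
  Finset.single_le_sum (f := fun i => |b i|) (fun _ _ => abs_nonneg _) (Finset.mem_univ i)

lemma affine_abs_le {d : ℕ} {R : ℝ} (b : Fin d → ℝ) (c : ℝ) {x : Fin d → ℝ}
    (hx : ∀ i, |x i| ≤ R) : |∑ i, b i * x i + c| ≤ R * l1 b + |c| := by
  refine (abs_add_le _ _).trans (add_le_add ?_ le_rfl)
  calc |∑ i, b i * x i| ≤ ∑ i, |b i * x i| := Finset.abs_sum_le_sum_abs _ _
    _ ≤ ∑ i, |b i| * R := Finset.sum_le_sum fun i _ => by
        rw [abs_mul]; exact mul_le_mul_of_nonneg_left (hx i) (abs_nonneg _)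
    _ = R * l1 b := by rw [l1, ← Finset.sum_mul]; ring

lemma netFun_sub_bound {d n : ℕ} {R : ℝ} (θ θ' : Fin n → NNParam d) {x : Fin d → ℝ}
    (hx : ∀ i, |x i| ≤ R) :
    |netFun θ x - netFun θ' x| ≤ (1 / (n : ℝ)) * ∑ j,
      (|(θ j).1 - (θ' j).1| * (R * l1 (θ' j).2.1 + |(θ' j).2.2|) +
        |(θ j).1| * (R * l1 (fun i => (θ j).2.1 i - (θ' j).2.1 i) + |(θ j).2.2 - (θ' j).2.2|)) := by
  unfold netFun
  rw [← mul_sub, abs_mul, ← Finset.sum_sub_distrib]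
  have h1n : |1 / (n : ℝ)| = 1 / (n : ℝ) := abs_of_nonneg (by positivity)
  rw [h1n]
  refine mul_le_mul_of_nonneg_left ?_ (by positivity)
  refine (Finset.abs_sum_le_sum_abs _ _).trans (Finset.sum_le_sum fun j _ => ?_)
  set a := (θ j).1; set b := (θ j).2.1; set c := (θ j).2.2
  set a' := (θ' j).1; set b' := (θ' j).2.1; set c' := (θ' j).2.2
  set u := ∑ i, b i * x i + c with hu
  set u' := ∑ i, b' i * x i + c' with hu'
  have hsplit : a * max u 0 - a' * max u' 0
      = (a - a') * max u' 0 + a * (max u 0 - max u' 0) := by ring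
  rw [hsplit]
  refine (abs_add_le _ _).trans (add_le_add ?_ ?_)
  · rw [abs_mul]
    refine mul_le_mul_of_nonneg_left ?_ (abs_nonneg _)
    have h1 : |max u' 0| ≤ |u'| := by
      rw [abs_of_nonneg (le_max_right _ _)]
      exact max_le (le_abs_self _) (abs_nonneg _)
    exact h1.trans (affine_abs_le b' c' hx)
  · rw [abs_mul]
    refine mul_le_mul_of_nonneg_left ?_ (abs_nonneg _)
    refine (abs_max_sub_max_le_abs _ _ _).trans ?_
    have : u - u' = ∑ i, (b i - b' i) * x i + (c - c') := by
      simp only [hu, hu', sub_mul, Finset.sum_sub_distrib]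
      ring
    rw [this]
    exact affine_abs_le _ _ hx


lemma pathNorm_cont {d n : ℕ} : Continuous (pathNorm (d := d) (n := n)) := by
  unfold pathNorm l1; fun_prop

lemma netLp_tendsto {d n : ℕ} {Ω : Set (Fin d → ℝ)} (hΩo : IsOpen Ω) (hΩb : IsBounded Ω)
    {θℓ : ℕ → Fin n → NNParam d} {θs : Fin n → NNParam d}
    (h : Tendsto θℓ atTop (nhds θs)) :
    Tendsto (fun ℓ => netLp Ω hΩo hΩb (θℓ ℓ)) atTop (nhds (netLp Ω hΩo hΩb θs)) := by
  obtain ⟨R₀, hR₀⟩ := isBounded_iff_forall_norm_le.mp hΩb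
  set R := max R₀ 0 with hRdef
  have hR : 0 ≤ R := le_max_right _ _
  have hxR : ∀ x ∈ Ω, ∀ i, |x i| ≤ R := fun x hx i =>
    (norm_le_pi_norm x i).trans ((hR₀ x hx).trans (le_max_left _ _))
  set E : (Fin n → NNParam d) → ℝ := fun θ => (1 / (n : ℝ)) * ∑ j,
      (|(θ j).1 - (θs j).1| * (R * l1 (θs j).2.1 + |(θs j).2.2|) +
        |(θ j).1| * (R * l1 (fun i => (θ j).2.1 i - (θs j).2.1 i) + |(θ j).2.2 - (θs j).2.2|))
    with hEdef
  have hEcont : Continuous E := by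
    unfold E
    unfold l1
    fun_prop
  have hEnonneg : ∀ θ, 0 ≤ E θ := fun θ => by
    refine mul_nonneg (by positivity) (Finset.sum_nonneg fun j _ => add_nonneg
      (mul_nonneg (abs_nonneg _) (add_nonneg (mul_nonneg hR (l1_nonneg _)) (abs_nonneg _)))
      (mul_nonneg (abs_nonneg _) (add_nonneg (mul_nonneg hR (l1_nonneg _)) (abs_nonneg _))))
  have hE0 : E θs = 0 := by
    simp [hEdef, l1]
  set C0 : ℝ := ((volume Ω).toReal) ^ ((2 : ENNReal).toReal⁻¹) with hC0
  have hnorm : ∀ θ, ‖netLp Ω hΩo hΩb θ - netLp Ω hΩo hΩb θs‖ ≤ C0 * E θ := by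
    intro θ
    rw [netLp, netLp, ← MemLp.toLp_sub, Lp.norm_toLp]
    have hb : eLpNorm (netFun θ - netFun θs) 2 (volume.restrict Ω) ≤
        (volume Ω) ^ ((2 : ENNReal).toReal⁻¹) * ENNReal.ofReal (E θ) := by
      have hae : ∀ᵐ x ∂(volume.restrict Ω), ‖(netFun θ - netFun θs) x‖ ≤ E θ := by
        filter_upwards [ae_restrict_mem hΩo.measurableSet] with x hx
        rw [Pi.sub_apply, Real.norm_eq_abs, hEdef]
        exact netFun_sub_bound θ θs (hxR x hx)
      have := eLpNorm_le_of_ae_bound (p := 2) hae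
      rwa [Measure.restrict_apply_univ] at this
    have hne : (volume Ω) ^ ((2 : ENNReal).toReal⁻¹) * ENNReal.ofReal (E θ) ≠ ⊤ :=
      ENNReal.mul_ne_top (ENNReal.rpow_ne_top_of_nonneg (by positivity) hΩb.measure_lt_top.ne)
        ENNReal.ofReal_ne_top
    refine (ENNReal.toReal_mono hne hb).trans_eq ?_
    rw [ENNReal.toReal_mul, ENNReal.toReal_ofReal (hEnonneg θ), ← ENNReal.toReal_rpow]
  rw [tendsto_iff_norm_sub_tendsto_zero]
  refine squeeze_zero (fun ℓ => norm_nonneg _) (fun ℓ => hnorm (θℓ ℓ)) ?_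
  have : Tendsto (fun ℓ => C0 * E (θℓ ℓ)) atTop (nhds (C0 * E θs)) :=
    tendsto_const_nhds.mul ((hEcont.tendsto θs).comp h)
  rwa [hE0, mul_zero] at this

/-- Stability of Tikhonov minimizers: if `(f, g') ↦ D(A f, g')` is
nonnegative and jointly sequentially lower semicontinuous (w.r.t. `L²(Ω)`-convergence in
`f` and norm convergence in `g'`), `g' ↦ D(y, g')` is continuous for each `y`, `φ` is
continuous, monotone, nonnegative and tends to `∞`, `g_k → g`, and each `θ_k` minimizes
`T(·, g_k)` over `Θ_n`, then some subsequence `θ_{k_ℓ}` converges to a minimizer `θ*` of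
`T(·, g)` over `Θ_n`, and the corresponding networks converge in `L²(Ω)`. -/
theorem tikhonov_minimizers_stable
    {d : ℕ} (hd : 1 ≤ d) (Ω : Set (Fin d → ℝ)) (hne : Ω.Nonempty) (hΩo : IsOpen Ω)
    (hΩb : IsBounded Ω)
    {Y : Type*} [NormedAddCommGroup Y] [NormedSpace ℝ Y]
    (A : Lp ℝ 2 (volume.restrict Ω) → Y)
    (D : Y → Y → ℝ) (hD0 : ∀ y y', 0 ≤ D y y')
    (hlsc : ∀ (F : ℕ → Lp ℝ 2 (volume.restrict Ω)) (f : Lp ℝ 2 (volume.restrict Ω))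
        (G : ℕ → Y) (g' : Y),
      Tendsto F atTop (nhds f) → Tendsto G atTop (nhds g') →
        D (A f) g' ≤ liminf (fun k => D (A (F k)) (G k)) atTop)
    (hDcont : ∀ y : Y, Continuous (fun g' => D y g'))
    (φ : ℝ → ℝ) (hφc : Continuous φ) (hφm : Monotone φ) (hφ0 : ∀ t, 0 ≤ φ t)
    (hφtop : Tendsto φ atTop atTop)
    (α : ℝ) (hα : 0 < α) (n : ℕ) (hn : 1 ≤ n)
    (g : Y) (gk : ℕ → Y) (hgk : Tendsto gk atTop (nhds g))
    (θk : ℕ → (Fin n → NNParam d)) (hθk : ∀ k, ΘCond (θk k))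
    (hmin : ∀ k, ∀ θ : Fin n → NNParam d, ΘCond θ →
      D (A (netLp Ω hΩo hΩb (θk k))) (gk k) + α * φ (pathNorm (θk k)) ≤
        D (A (netLp Ω hΩo hΩb θ)) (gk k) + α * φ (pathNorm θ)) :
    ∃ (ψ : ℕ → ℕ) (θs : Fin n → NNParam d), StrictMono ψ ∧ ΘCond θs ∧
      Tendsto (fun ℓ => θk (ψ ℓ)) atTop (nhds θs) ∧
      Tendsto (fun ℓ => netLp Ω hΩo hΩb (θk (ψ ℓ))) atTop (nhds (netLp Ω hΩo hΩb θs)) ∧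
      ∀ θ : Fin n → NNParam d, ΘCond θ →
        D (A (netLp Ω hΩo hΩb θs)) g + α * φ (pathNorm θs) ≤
          D (A (netLp Ω hΩo hΩb θ)) g + α * φ (pathNorm θ) := by
  classical
  -- a reference admissible parameter with zero network and zero path norm
  set θ0 : Fin n → NNParam d := fun _ => (0, fun _ => 0, 1) with hθ0def
  have hθ0 : ΘCond θ0 := fun j => by simp [hθ0def, l1]
  have hpath0 : pathNorm θ0 = 0 := by simp [pathNorm, hθ0def]
  set f0 := netLp Ω hΩo hΩb θ0 with hf0
  have hDk : Tendsto (fun k => D (A f0) (gk k)) atTop (nhds (D (A f0) g)) :=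
    ((hDcont (A f0)).tendsto g).comp hgk
  obtain ⟨M, hM⟩ : ∃ M, ∀ k, D (A f0) (gk k) ≤ M := by
    obtain ⟨M, hM⟩ := hDk.bddAbove_range
    exact ⟨M, fun k => hM ⟨k, rfl⟩⟩
  have hφbound : ∀ k, φ (pathNorm (θk k)) ≤ (M + α * φ 0) / α := by
    intro k
    have h1 := hmin k θ0 hθ0
    rw [hpath0] at h1
    have h2 := hD0 (A (netLp Ω hΩo hΩb (θk k))) (gk k)
    have h3 := hM k
    rw [le_div_iff₀ hα]
    nlinarith
  obtain ⟨t0, ht0⟩ : ∃ t0, ∀ t ≥ t0, (M + α * φ 0) / α < φ t :=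
    eventually_atTop.mp (hφtop.eventually_gt_atTop _)
  have hpathbound : ∀ k, pathNorm (θk k) ≤ t0 := by
    intro k
    by_contra hc
    push_neg at hc
    exact absurd (hφbound k) (not_le.mpr (ht0 _ hc.le))
  have hn0 : (0 : ℝ) < n := by exact_mod_cast hn
  set R' : ℝ := max ((n : ℝ) * max t0 0) 1 with hR'def
  have hR'0 : (0 : ℝ) ≤ R' := le_trans zero_le_one (le_max_right _ _)
  have hmem : ∀ k, θk k ∈ Metric.closedBall (0 : Fin n → NNParam d) R' := by
    intro k
    rw [mem_closedBall_zero_iff, pi_norm_le_iff_of_nonneg hR'0]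
    intro j
    have hb1 : l1 (θk k j).2.1 + |(θk k j).2.2| = 1 := hθk k j
    have hpn : pathNorm (θk k) = (1 / (n : ℝ)) * ∑ i, |(θk k i).1| := by
      unfold pathNorm
      congr 1
      exact Finset.sum_congr rfl fun i _ => by rw [hθk k i, mul_one]
    have hsum : ∑ i, |(θk k i).1| ≤ (n : ℝ) * max t0 0 := by
      have := hpathbound k
      rw [hpn] at this
      have h4 : (1 / (n : ℝ)) * ∑ i, |(θk k i).1| ≤ max t0 0 :=
        this.trans (le_max_left _ _)
      calc ∑ i, |(θk k i).1| = (n : ℝ) * ((1 / (n : ℝ)) * ∑ i, |(θk k i).1|) := by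
            field_simp
        _ ≤ (n : ℝ) * max t0 0 := by
            exact mul_le_mul_of_nonneg_left h4 hn0.le
    have ha : |(θk k j).1| ≤ (n : ℝ) * max t0 0 :=
      (Finset.single_le_sum (f := fun i => |(θk k i).1|)
        (fun _ _ => abs_nonneg _) (Finset.mem_univ j)).trans hsum
    have hl1 : l1 (θk k j).2.1 ≤ 1 := by
      have := abs_nonneg (θk k j).2.2; linarith
    have hc1 : |(θk k j).2.2| ≤ 1 := by
      have := l1_nonneg (θk k j).2.1; linarith
    rw [Prod.norm_def, Prod.norm_def]
    refine max_le (ha.trans (le_max_left _ _)) (max_le ?_ ?_)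
    · rw [pi_norm_le_iff_of_nonneg hR'0]
      intro i
      exact ((abs_le_l1 _ i).trans hl1).trans (le_max_right _ _)
    · exact hc1.trans (le_max_right _ _)
  obtain ⟨θs, hθsmem, ψ, hψ, hconv⟩ :=
    (isCompact_closedBall (0 : Fin n → NNParam d) R').tendsto_subseq hmem
  have hΘs : ΘCond θs := by
    intro j
    have hFcont : Continuous (fun θ : Fin n → NNParam d => l1 (θ j).2.1 + |(θ j).2.2|) :=
      (l1_cont.comp ((continuous_apply j).snd.fst)).add ((continuous_apply j).snd.snd.abs)
    have hFt := (hFcont.tendsto θs).comp hconv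
    have hFt' : Tendsto (fun _ : ℕ => (1 : ℝ)) atTop (nhds (l1 (θs j).2.1 + |(θs j).2.2|)) := by
      refine hFt.congr fun ℓ => ?_
      exact hθk (ψ ℓ) j
    exact tendsto_nhds_unique hFt' tendsto_const_nhds
  have hnetconv : Tendsto (fun ℓ => netLp Ω hΩo hΩb (θk (ψ ℓ))) atTop
      (nhds (netLp Ω hΩo hΩb θs)) := netLp_tendsto hΩo hΩb hconv
  refine ⟨ψ, θs, hψ, hΘs, hconv, hnetconv, ?_⟩
  intro θ hθ
  have hgψ : Tendsto (fun ℓ => gk (ψ ℓ)) atTop (nhds g) := hgk.comp hψ.tendsto_atTop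
  set u : ℕ → ℝ := fun ℓ => D (A (netLp Ω hΩo hΩb (θk (ψ ℓ)))) (gk (ψ ℓ)) with hudef
  have hA : D (A (netLp Ω hΩo hΩb θs)) g ≤ liminf u atTop :=
    hlsc _ _ _ _ hnetconv hgψ
  set v : ℕ → ℝ := fun ℓ => D (A (netLp Ω hΩo hΩb θ)) (gk (ψ ℓ)) + α * φ (pathNorm θ)
      - α * φ (pathNorm (θk (ψ ℓ))) with hvdef
  have huv : ∀ ℓ, u ℓ ≤ v ℓ := by
    intro ℓ
    have := hmin (ψ ℓ) θ hθ
    simp only [hudef, hvdef]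
    linarith
  have hφconv : Tendsto (fun ℓ => α * φ (pathNorm (θk (ψ ℓ)))) atTop
      (nhds (α * φ (pathNorm θs))) :=
    tendsto_const_nhds.mul ((hφc.tendsto _).comp ((pathNorm_cont.tendsto θs).comp hconv))
  have hvt : Tendsto v atTop (nhds (D (A (netLp Ω hΩo hΩb θ)) g + α * φ (pathNorm θ)
      - α * φ (pathNorm θs))) :=
    ((((hDcont _).tendsto g).comp hgψ).add tendsto_const_nhds).sub hφconv
  have hliminf : liminf u atTop ≤ liminf v atTop :=
    liminf_le_liminf (Eventually.of_forall huv)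
      (isBoundedUnder_of ⟨0, fun ℓ => hD0 _ _⟩)
      (hvt.isBoundedUnder_le.isCoboundedUnder_ge)
  have hveq : liminf v atTop = D (A (netLp Ω hΩo hΩb θ)) g + α * φ (pathNorm θ)
      - α * φ (pathNorm θs) := hvt.liminf_eq
  have := hA.trans (hliminf.trans_eq hveq)
  linarith

end
end

section
/- Let Ω ⊂ ℝ^d be a nonempty bounded open set, Y a normed vector space, A : L²(Ω) → Y a map, f† ∈ L²(Ω), and g := A(f†). Assume: (i) A is locally Hölder continuous at f† of order θ ∈ (0, 1]: there exist L_A > 0 and γ₁ > 0 with ‖A(f) − A(f†)‖_Y ≤ L_A·‖f − f†‖_{L²(Ω)}^θ whenever ‖f − f†‖_{L²(Ω)} < γ₁; (ii) R : L²(Ω) → [0, ∞) satisfies R(f†) < ∞ and is locally Hölder continuous at f† of the same order θ: there exist L_R > 0 and γ₂ > 0 with |R(f) − R(f†)| ≤ L_R·‖f − f†‖_{L²(Ω)}^θ whenever ‖f − f†‖_{L²(Ω)} < γ₂; (iii) there exists C₀ > 0 such that for every n ≥ 1 there is f_n ∈ X_{n, r(n)} with ‖f_n − f†‖_{L²(Ω)}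 ≤ C₀/√n, where r : ℕ → (0, ∞). Fix τ > 1 and c₀ > 0, and set β_n := c₀·n^{−θ/2}. Then there exists a constant C > 0 such that for every δ ∈ (0, 1], every g^δ ∈ Y with ‖g^δ − g‖_Y ≤ δ, and every integer n ≥ C·δ^{−2/θ}, one has inf_{f ∈ X_{n, r(n)}} ( ‖A(f) − g^δ‖_Y + β_n·R(f) ) ≤ τ·δ. Consequently, the discrepancy-principle stopping width of the modified expanding neural network method is O(δ^{−2/θ}) as δ → 0. -/
open MeasureTheory Filter Topology Bornology

noncomputable section

set_option maxHeartbeats 1000000 in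
/-- Quantitative termination of the discrepancy principle for the
modified (penalized) expanding neural network method: if `A` and `R ≥ 0` are locally
Hölder continuous of order `θ ∈ (0,1]` at `f†`, the network classes `X_{n,r(n)}`
approximate `f†` at rate `C₀/√n`, and `β_n = c₀ n^{−θ/2}`, then there is `C > 0` such
that for every `δ ∈ (0,1]`, every `g^δ` with `‖g^δ − g‖ ≤ δ` and every width
`n ≥ C δ^{−2/θ}`, the minimal penalized residual over `X_{n,r(n)}` is `≤ τδ`.
Consequently the stopping width is `O(δ^{−2/θ})`. -/
theorem modified_discrepancy_principle_stopping_width_bound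
    {d : ℕ} (hd : 1 ≤ d) (Ω : Set (Fin d → ℝ)) (hne : Ω.Nonempty) (hΩo : IsOpen Ω)
    (hΩb : IsBounded Ω)
    {Y : Type*} [NormedAddCommGroup Y] [NormedSpace ℝ Y]
    (A : Lp ℝ 2 (volume.restrict Ω) → Y)
    (fdag : Lp ℝ 2 (volume.restrict Ω))
    (θh : ℝ) (hθ0 : 0 < θh) (hθ1 : θh ≤ 1)
    (LA γ₁ : ℝ) (hLA : 0 < LA) (hγ₁ : 0 < γ₁)
    (hAH : ∀ f : Lp ℝ 2 (volume.restrict Ω),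
      ‖f - fdag‖ < γ₁ → ‖A f - A fdag‖ ≤ LA * ‖f - fdag‖ ^ θh)
    (R : Lp ℝ 2 (volume.restrict Ω) → ℝ) (hR0 : ∀ f, 0 ≤ R f)
    (LR γ₂ : ℝ) (hLR : 0 < LR) (hγ₂ : 0 < γ₂)
    (hRH : ∀ f : Lp ℝ 2 (volume.restrict Ω),
      ‖f - fdag‖ < γ₂ → |R f - R fdag| ≤ LR * ‖f - fdag‖ ^ θh)
    (r : ℕ → ℝ) (hr : ∀ n, 0 < r n)
    (C₀ : ℝ) (hC₀ : 0 < C₀)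
    (happrox : ∀ n : ℕ, 1 ≤ n →
      ∃ f ∈ Xlp Ω hΩo hΩb n (r n), ‖f - fdag‖ ≤ C₀ / Real.sqrt n)
    (τ : ℝ) (hτ : 1 < τ) (c₀ : ℝ) (hc₀ : 0 < c₀) :
    ∃ C : ℝ, 0 < C ∧
      ∀ δ : ℝ, 0 < δ → δ ≤ 1 → ∀ gδ : Y, ‖gδ - A fdag‖ ≤ δ →
        ∀ n : ℕ, C * δ ^ (-(2 / θh)) ≤ (n : ℝ) →
          sInf {y : ℝ | ∃ f ∈ Xlp Ω hΩo hΩb n (r n),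
              y = ‖A f - gδ‖ + (c₀ * (n : ℝ) ^ (-(θh / 2))) * R f} ≤ τ * δ := by
  have hγ : 0 < min γ₁ γ₂ := lt_min hγ₁ hγ₂
  have hτ' : 0 < τ - 1 := by linarith
  have hC0θ : 0 < C₀ ^ θh := Real.rpow_pos_of_pos hC₀ θh
  set K : ℝ := LA * C₀ ^ θh + c₀ * (R fdag + LR * C₀ ^ θh) with hKdef
  have hK : 0 < K := by
    have h1 : 0 < LA * C₀ ^ θh := mul_pos hLA hC0θ
    have h2 : 0 ≤ c₀ * (R fdag + LR * C₀ ^ θh) :=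
      mul_nonneg hc₀.le (add_nonneg (hR0 fdag) (mul_nonneg hLR.le hC0θ.le))
    linarith
  refine ⟨max ((K / (τ - 1)) ^ (2 / θh)) (max 1 ((C₀ / min γ₁ γ₂) ^ 2 + 1)), ?_, ?_⟩
  · exact lt_of_lt_of_le one_pos ((le_max_left _ _).trans (le_max_right _ _))
  intro δ hδ hδ1 gδ hgδ n hn
  set C : ℝ := max ((K / (τ - 1)) ^ (2 / θh)) (max 1 ((C₀ / min γ₁ γ₂) ^ 2 + 1)) with hCdef
  have hC1 : 1 ≤ C := (le_max_left _ _).trans (le_max_right _ _)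
  have hδinv : 1 ≤ δ ^ (-(2 / θh)) :=
    Real.one_le_rpow_of_pos_of_le_one_of_nonpos hδ hδ1
      (neg_nonpos.mpr (by positivity))
  have hN1 : (1 : ℝ) ≤ (n : ℝ) := by nlinarith
  have hn1 : 1 ≤ n := Nat.one_le_cast.mp hN1
  have hNpos : (0 : ℝ) < (n : ℝ) := by linarith
  obtain ⟨f, hfX, hfapprox⟩ := happrox n hn1
  have hsqrt : 0 < Real.sqrt n := Real.sqrt_pos.mpr hNpos
  -- closeness: ‖f - fdag‖ < min γ₁ γ₂
  have hnγ : (C₀ / min γ₁ γ₂) ^ 2 < (n : ℝ) := by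
    have h2 : (C₀ / min γ₁ γ₂) ^ 2 + 1 ≤ C := (le_max_right _ _).trans (le_max_right _ _)
    nlinarith
  have hsqγ : C₀ / min γ₁ γ₂ < Real.sqrt n := (Real.lt_sqrt (by positivity)).mpr hnγ
  have he : ‖f - fdag‖ < min γ₁ γ₂ := by
    refine lt_of_le_of_lt hfapprox ?_
    rw [div_lt_iff₀ hsqrt]
    have := (div_lt_iff₀ hγ).mp hsqγ
    linarith
  have he0 : (0 : ℝ) ≤ ‖f - fdag‖ := norm_nonneg _
  -- rewrite (C₀/√n)^θ
  set s : ℝ := (n : ℝ) ^ (-(θh / 2)) with hsdef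
  have hs_pos : 0 < s := Real.rpow_pos_of_pos hNpos _
  have hs_le_one : s ≤ 1 :=
    Real.rpow_le_one_of_one_le_of_nonpos hN1 (neg_nonpos.mpr (by positivity))
  have hs_eq : (C₀ / Real.sqrt n) ^ θh = C₀ ^ θh * s := by
    rw [Real.div_rpow hC₀.le (Real.sqrt_nonneg _), Real.sqrt_eq_rpow,
      ← Real.rpow_mul hNpos.le, show (1 / 2 : ℝ) * θh = θh / 2 from by ring,
      div_eq_mul_inv, ← Real.rpow_neg hNpos.le, hsdef]
  have heθ : ‖f - fdag‖ ^ θh ≤ C₀ ^ θh * s := by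
    rw [← hs_eq]; exact Real.rpow_le_rpow he0 hfapprox hθ0.le
  -- key bound: K * s ≤ (τ-1) * δ
  have hnθpos : 0 < (n : ℝ) ^ (θh / 2) := Real.rpow_pos_of_pos hNpos _
  have hKs : K * s ≤ (τ - 1) * δ := by
    have hbase : 0 ≤ K / ((τ - 1) * δ) := by positivity
    have h1 : (K / ((τ - 1) * δ)) ^ (2 / θh) ≤ (n : ℝ) := by
      have heq : (K / ((τ - 1) * δ)) ^ (2 / θh)
          = (K / (τ - 1)) ^ (2 / θh) * δ ^ (-(2 / θh)) := by
        rw [Real.rpow_neg hδ.le, ← Real.inv_rpow hδ.le,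
          ← Real.mul_rpow (by positivity) (by positivity)]
        congr 1
        field_simp
      have hA1 : (K / (τ - 1)) ^ (2 / θh) ≤ C := le_max_left _ _
      calc (K / ((τ - 1) * δ)) ^ (2 / θh)
          = (K / (τ - 1)) ^ (2 / θh) * δ ^ (-(2 / θh)) := heq
        _ ≤ C * δ ^ (-(2 / θh)) :=
            mul_le_mul_of_nonneg_right hA1 (Real.rpow_nonneg hδ.le _)
        _ ≤ (n : ℝ) := hn
    have h2 : K / ((τ - 1) * δ) ≤ (n : ℝ) ^ (θh / 2) := by
      have h3 := Real.rpow_le_rpow (Real.rpow_nonneg hbase _) h1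
        (by positivity : (0:ℝ) ≤ θh / 2)
      have hθne : θh ≠ 0 := ne_of_gt hθ0
      rwa [← Real.rpow_mul hbase,
        show (2 / θh) * (θh / 2) = 1 from by field_simp,
        Real.rpow_one] at h3
    have hs_eq' : s = ((n : ℝ) ^ (θh / 2))⁻¹ := by
      rw [hsdef, Real.rpow_neg hNpos.le]
    rw [hs_eq', ← div_eq_mul_inv, div_le_iff₀ hnθpos]
    rw [div_le_iff₀ (by positivity)] at h2
    exact h2.trans_eq (mul_comm _ _)
  -- the candidate value
  have hA' : ‖A f - A fdag‖ ≤ LA * (C₀ ^ θh * s) := by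
    calc ‖A f - A fdag‖ ≤ LA * ‖f - fdag‖ ^ θh :=
          hAH f (lt_of_lt_of_le he (min_le_left _ _))
      _ ≤ LA * (C₀ ^ θh * s) := mul_le_mul_of_nonneg_left heθ hLA.le
  have hRf : R f ≤ R fdag + LR * (C₀ ^ θh * s) := by
    have h := hRH f (lt_of_lt_of_le he (min_le_right _ _))
    have h2 := (abs_le.mp h).2
    have h3 : LR * ‖f - fdag‖ ^ θh ≤ LR * (C₀ ^ θh * s) :=
      mul_le_mul_of_nonneg_left heθ hLR.le
    linarith
  have htri : ‖A f - gδ‖ ≤ ‖A f - A fdag‖ + δ := by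
    calc ‖A f - gδ‖ = ‖(A f - A fdag) + (A fdag - gδ)‖ := by abel_nf
      _ ≤ ‖A f - A fdag‖ + ‖A fdag - gδ‖ := norm_add_le _ _
      _ ≤ ‖A f - A fdag‖ + δ := by rw [norm_sub_rev (A fdag) gδ]; linarith
  have hv : ‖A f - gδ‖ + (c₀ * s) * R f ≤ τ * δ := by
    have hRfnn : 0 ≤ R f := hR0 f
    have h1 : (c₀ * s) * R f ≤ (c₀ * s) * (R fdag + LR * (C₀ ^ θh * s)) :=
      mul_le_mul_of_nonneg_left hRf (by positivity)
    have hss : s * s ≤ s := by nlinarith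
    have h2 : (c₀ * s) * (R fdag + LR * (C₀ ^ θh * s))
        ≤ s * (c₀ * (R fdag + LR * C₀ ^ θh)) := by
      have hcLR : 0 ≤ c₀ * (LR * C₀ ^ θh) := by positivity
      have h2' := mul_le_mul_of_nonneg_left hss hcLR
      linarith [h2']
    have h4 : LA * (C₀ ^ θh * s) = s * (LA * C₀ ^ θh) := by ring
    have h5 : s * (LA * C₀ ^ θh) + s * (c₀ * (R fdag + LR * C₀ ^ θh)) = K * s := by
      rw [hKdef]; ring
    linarith [htri, hA', h1, h2, h4, h5, hKs]
  refine le_trans (csInf_le ?_ ?_) hv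
  · refine ⟨0, fun y hy => ?_⟩
    obtain ⟨f', hf', rfl⟩ := hy
    exact add_nonneg (norm_nonneg _) (mul_nonneg (by positivity) (hR0 f'))
  · exact ⟨f, hfX, rfl⟩

end
end
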